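/- For all n ≥ 1, the effective resistances between the three corner words of the graph on W_n satisfy R_n(0ⁿ,1ⁿ) = R_n(1ⁿ,2ⁿ) = R_n(0ⁿ,2ⁿ) = (5/3)ⁿ − 1. -/

import Mathlib

open MeasureTheory Filter Set
open scoped ENNReal NNReal Classical

noncomputable section

namespace SG

/-- The three vertices `p₀ = (0,0)`, `p₁ = (1,0)`, `p₂ = (1/2, √3/2)` viewed in `ℂ`. -/
def p : Fin 3 → ℂ := ![0, 1, 1/2 + (Real.sqrt 3 / 2) * Complex.I]

/-- The three contraction maps `fᵢ x = (x + pᵢ)/2`. -/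
def f (i : Fin 3) (x : ℂ) : ℂ := (x + p i) / 2

/-- `K` is the Sierpinski gasket: the (unique) nonempty compact set with
`K = f₀(K) ∪ f₁(K) ∪ f₂(K)`. -/
def IsSG (K : Set ℂ) : Prop :=
  K.Nonempty ∧ IsCompact K ∧ K = f 0 '' K ∪ f 1 '' K ∪ f 2 '' K

/-- `α = log 3 / log 2`. -/
def alpha : ℝ := Real.log 3 / Real.log 2

/-- `β* = log 5 / log 2`. -/
def betastar : ℝ := Real.log 5 / Real.log 2

/-- The normalized `α`-dimensional Hausdorff measure restricted to `K`. -/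
def nu (K : Set ℂ) : Measure ℂ :=
  ((Measure.hausdorffMeasure alpha : Measure ℂ) K)⁻¹ •
    (Measure.hausdorffMeasure alpha : Measure ℂ).restrict K

/-- `f_w` for a finite word `w` over `{0,1,2}` (empty word gives the identity). -/
def fwl : List (Fin 3) → ℂ → ℂ
  | [] => id
  | i :: t => f i ∘ fwl t

/-- `f_w` for a word `w ∈ W_n = {0,1,2}ⁿ`. -/
def fw {n : ℕ} (w : Fin n → Fin 3) : ℂ → ℂ := fwl (List.ofFn w)

/-- The cell `K_w = f_w(K)`. -/
def Kw (K : Set ℂ) {n : ℕ} (w : Fin n → Fin 3) : Set ℂ := fw w '' K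

/-- Adjacency `w⁽¹⁾ ∼ₙ w⁽²⁾`: distinct words with intersecting cells. -/
def Adj (K : Set ℂ) {n : ℕ} (w1 w2 : Fin n → Fin 3) : Prop :=
  w1 ≠ w2 ∧ (Kw K w1 ∩ Kw K w2).Nonempty

/-- `Pₙu(w) = ∫_K u(f_w(x)) ν(dx)`. -/
def P (K : Set ℂ) {n : ℕ} (u : ℂ → ℝ) (w : Fin n → Fin 3) : ℝ :=
  ∫ x, u (fw w x) ∂(nu K)

/-- `Aₙ(u)`: sum over unordered adjacent pairs in `W_n` of `(Pₙu(w⁽¹⁾) − Pₙu(w⁽²⁾))²`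
(written as half the sum over ordered pairs). -/
def A (K : Set ℂ) (n : ℕ) (u : ℂ → ℝ) : ℝ :=
  (1/2) * ∑ w1 : Fin n → Fin 3, ∑ w2 : Fin n → Fin 3,
    if Adj K w1 w2 then (P K u w1 - P K u w2)^2 else 0

/-- The graph energy `Eₙ(u,u)` on `W_n` (half the sum over ordered adjacent pairs). -/
def En (K : Set ℂ) {n : ℕ} (u : (Fin n → Fin 3) → ℝ) : ℝ :=
  (1/2) * ∑ w1 : Fin n → Fin 3, ∑ w2 : Fin n → Fin 3,
    if Adj K w1 w2 then (u w1 - u w2)^2 else 0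

/-- The effective resistance `Rₙ(a,b)` between two words of `W_n`. -/
def Rn (K : Set ℂ) {n : ℕ} (a b : Fin n → Fin 3) : ℝ :=
  (sInf {e : ℝ | ∃ u : (Fin n → Fin 3) → ℝ, u a = 1 ∧ u b = 0 ∧ e = En K u})⁻¹


/-! ### Combinatorics of words -/

/-- indicator of letter 1 -/
def d1 (a : Fin 3) : ℕ := if a = 1 then 1 else 0
/-- indicator of letter 2 -/
def d2 (a : Fin 3) : ℕ := if a = 2 then 1 else 0

@[simp] lemma d1_0 : d1 0 = 0 := rfl
@[simp] lemma d1_1 : d1 1 = 1 := rfl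
@[simp] lemma d1_2 : d1 2 = 0 := rfl
@[simp] lemma d2_0 : d2 0 = 0 := rfl
@[simp] lemma d2_1 : d2 1 = 0 := rfl
@[simp] lemma d2_2 : d2 2 = 1 := rfl

/-- generic digit value of a word with terminal letter -/
def valD (d : Fin 3 → ℕ) {n : ℕ} (w : Fin n → Fin 3) (i : Fin 3) : ℕ :=
  (∑ k : Fin n, 2 ^ (n - 1 - (k : ℕ)) * d (w k)) + d i

lemma valD_cons (d : Fin 3 → ℕ) {n : ℕ} (a : Fin 3) (w : Fin n → Fin 3) (i : Fin 3) :
    valD d (Fin.cons a w) i = 2 ^ n * d a + valD d w i := by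
  unfold valD
  rw [Fin.sum_univ_succ, add_assoc]
  simp only [Fin.cons_zero, Fin.cons_succ, Fin.val_zero, Fin.val_succ, Nat.add_sub_cancel,
    Nat.sub_zero]
  congr 2
  exact Finset.sum_congr rfl fun k _ => by congr 2; omega

lemma valD_le (d : Fin 3 → ℕ) (hd : ∀ a, d a ≤ 1) : ∀ {n : ℕ} (w : Fin n → Fin 3) (i : Fin 3),
    valD d w i ≤ 2 ^ n := by
  intro n
  induction n with
  | zero => intro w i; simpa [valD] using hd i
  | succ n ih =>
    intro w i
    rw [← Fin.cons_self_tail w, valD_cons]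
    have h1 := hd (w 0)
    have h2 := ih (Fin.tail w) i
    have hpow : (2:ℕ) ^ (n+1) = 2 * 2^n := by ring
    rcases Nat.le_one_iff_eq_zero_or_eq_one.mp h1 with h0 | h0 <;> rw [h0] <;> omega

lemma valD_eq_max (d : Fin 3 → ℕ) (hd : ∀ a, d a ≤ 1) : ∀ {n : ℕ} (w : Fin n → Fin 3) (i : Fin 3),
    valD d w i = 2 ^ n → (∀ k, d (w k) = 1) ∧ d i = 1 := by
  intro n
  induction n with
  | zero =>
    intro w i h
    refine ⟨fun k => k.elim0, ?_⟩
    simpa [valD] using h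
  | succ n ih =>
    intro w i h
    rw [← Fin.cons_self_tail w, valD_cons] at h
    have hle := valD_le d hd (Fin.tail w) i
    have h1 := hd (w 0)
    have hpow : (2:ℕ)^(n+1) = 2 * 2^n := by ring
    have hp : (0:ℕ) < 2^n := by positivity
    have hd0 : d (w 0) = 1 := by
      rcases Nat.le_one_iff_eq_zero_or_eq_one.mp h1 with h0 | h0 <;> rw [h0] at h <;> omega
    rw [hd0] at h
    have hv : valD d (Fin.tail w) i = 2^n := by omega
    obtain ⟨hall, hi⟩ := ih (Fin.tail w) i hv
    refine ⟨fun k => ?_, hi⟩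
    rcases Fin.eq_zero_or_eq_succ k with rfl | ⟨k', rfl⟩
    · exact hd0
    · exact hall k'

lemma valD_eq_zero {d : Fin 3 → ℕ} {n : ℕ} {w : Fin n → Fin 3} {i : Fin 3}
    (h : valD d w i = 0) : (∀ k, d (w k) = 0) ∧ d i = 0 := by
  unfold valD at h
  have hsum : (∑ k : Fin n, 2 ^ (n - 1 - (k : ℕ)) * d (w k)) = 0 ∧ d i = 0 := by omega
  refine ⟨fun k => ?_, hsum.2⟩
  have := (Finset.sum_eq_zero_iff.mp hsum.1) k (Finset.mem_univ k)
  have hp : 0 < 2 ^ (n - 1 - (k:ℕ)) := by positivity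
  rcases Nat.mul_eq_zero.mp this with h' | h'
  · omega
  · exact h'

lemma valD_all_zero {d : Fin 3 → ℕ} {n : ℕ} {w : Fin n → Fin 3} {i : Fin 3}
    (hw : ∀ k, d (w k) = 0) (hi : d i = 0) : valD d w i = 0 := by
  unfold valD
  rw [hi, Finset.sum_eq_zero (fun k _ => by rw [hw k, mul_zero])]

lemma d1_le : ∀ a, d1 a ≤ 1 := by decide
lemma d2_le : ∀ a, d2 a ≤ 1 := by decide

/-- neighbor-word relation -/
def NbrC {n : ℕ} (w v : Fin n → Fin 3) : Prop :=
  ∃ m : Fin n, (∀ k : Fin n, (k:ℕ) < (m:ℕ) → w k = v k) ∧ w m ≠ v m ∧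
    (∀ k : Fin n, (m:ℕ) < (k:ℕ) → w k = v m ∧ v k = w m)

/-- neighbor-word relation with touching corners -/
def NbrP {n : ℕ} (w v : Fin n → Fin 3) (i j : Fin 3) : Prop :=
  ∃ m : Fin n, (∀ k : Fin n, (k:ℕ) < (m:ℕ) → w k = v k) ∧ w m ≠ v m ∧
    (∀ k : Fin n, (m:ℕ) < (k:ℕ) → w k = v m ∧ v k = w m) ∧ i = v m ∧ j = w m

lemma NbrP.nbrC {n : ℕ} {w v : Fin n → Fin 3} {i j : Fin 3} (h : NbrP w v i j) : NbrC w v := by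
  obtain ⟨m, h1, h2, h3, _, _⟩ := h
  exact ⟨m, h1, h2, h3⟩

lemma NbrC.exists_nbrP {n : ℕ} {w v : Fin n → Fin 3} (h : NbrC w v) : ∃ i j, NbrP w v i j := by
  obtain ⟨m, h1, h2, h3⟩ := h
  exact ⟨v m, w m, m, h1, h2, h3, rfl, rfl⟩

lemma NbrC.symm {n : ℕ} {w v : Fin n → Fin 3} (h : NbrC w v) : NbrC v w := by
  obtain ⟨m, h1, h2, h3⟩ := h
  exact ⟨m, fun k hk => (h1 k hk).symm, fun he => h2 he.symm,
    fun k hk => ⟨(h3 k hk).2, (h3 k hk).1⟩⟩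

lemma NbrC.ne {n : ℕ} {w v : Fin n → Fin 3} (h : NbrC w v) : w ≠ v := by
  obtain ⟨m, _, h2, _⟩ := h
  exact fun he => h2 (by rw [he])

lemma nbrP_zero {n : ℕ} {a b i j : Fin 3} {w v : Fin n → Fin 3}
    (hab : a ≠ b) (hw : ∀ k, w k = b) (hv : ∀ k, v k = a) (hi : i = b) (hj : j = a) :
    NbrP (Fin.cons a w) (Fin.cons b v) i j := by
  refine ⟨0, fun k hk => absurd hk (by simp), by simpa using hab, fun k hk => ?_, by simpa using hi,
    by simpa using hj⟩
  rcases Fin.eq_zero_or_eq_succ k with rfl | ⟨k', rfl⟩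
  · simp at hk
  · simp [Fin.cons_succ, hw k', hv k']

lemma nbrP_cons {n : ℕ} {a i j : Fin 3} {w v : Fin n → Fin 3} (h : NbrP w v i j) :
    NbrP (Fin.cons a w) (Fin.cons a v) i j := by
  obtain ⟨m, h1, h2, h3, hi, hj⟩ := h
  refine ⟨m.succ, fun k hk => ?_, by simpa using h2, fun k hk => ?_, by simpa using hi,
    by simpa using hj⟩
  · rcases Fin.eq_zero_or_eq_succ k with rfl | ⟨k', rfl⟩
    · simp
    · simp only [Fin.cons_succ]
      exact h1 k' (by simpa using hk)
  · rcases Fin.eq_zero_or_eq_succ k with rfl | ⟨k', rfl⟩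
    · simp at hk
    · simp only [Fin.cons_succ]
      exact h3 k' (by simpa using hk)

lemma d1_eq_one : ∀ (a : Fin 3), d1 a = 1 → a = 1 := by decide
lemma d2_eq_one : ∀ (a : Fin 3), d2 a = 1 → a = 2 := by decide
lemma d_eq_zero : ∀ (a : Fin 3), d1 a = 0 → d2 a = 0 → a = 0 := by decide

/-- all letters 1 (and terminal) from maximal val1 -/
lemma val1_max {n : ℕ} {w : Fin n → Fin 3} {i : Fin 3} (h : valD d1 w i = 2^n) :
    (∀ k, w k = 1) ∧ i = 1 := by
  obtain ⟨hw, hi⟩ := valD_eq_max d1 d1_le w i h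
  exact ⟨fun k => d1_eq_one _ (hw k), d1_eq_one _ hi⟩

lemma val2_max {n : ℕ} {w : Fin n → Fin 3} {i : Fin 3} (h : valD d2 w i = 2^n) :
    (∀ k, w k = 2) ∧ i = 2 := by
  obtain ⟨hw, hi⟩ := valD_eq_max d2 d2_le w i h
  exact ⟨fun k => d2_eq_one _ (hw k), d2_eq_one _ hi⟩

lemma vals_zero {n : ℕ} {w : Fin n → Fin 3} {i : Fin 3} (h1 : valD d1 w i = 0)
    (h2 : valD d2 w i = 0) : (∀ k, w k = 0) ∧ i = 0 := by
  obtain ⟨hw1, hi1⟩ := valD_eq_zero h1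
  obtain ⟨hw2, hi2⟩ := valD_eq_zero h2
  exact ⟨fun k => d_eq_zero _ (hw1 k) (hw2 k), d_eq_zero _ hi1 hi2⟩

lemma val2_of_all1 {n : ℕ} {w : Fin n → Fin 3} {i : Fin 3} (hw : ∀ k, w k = 1) (hi : i = 1) :
    valD d2 w i = 0 :=
  valD_all_zero (fun k => by rw [hw k]; rfl) (by rw [hi]; rfl)

lemma val1_of_all2 {n : ℕ} {w : Fin n → Fin 3} {i : Fin 3} (hw : ∀ k, w k = 2) (hi : i = 2) :
    valD d1 w i = 0 :=
  valD_all_zero (fun k => by rw [hw k]; rfl) (by rw [hi]; rfl)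

/-- The key digit lemma. -/
lemma key_digit : ∀ {n : ℕ} (w v : Fin n → Fin 3) (i j : Fin 3),
    valD d1 w i = valD d1 v j → valD d2 w i = valD d2 v j →
    (w = v ∧ i = j) ∨ NbrP w v i j := by
  intro n
  induction n with
  | zero =>
    intro w v i j h1 h2
    left
    refine ⟨funext fun k => k.elim0, ?_⟩
    simp only [valD, Finset.univ_eq_empty, Finset.sum_empty, zero_add] at h1 h2
    revert h1 h2
    revert i j
    decide
  | succ n ih =>
    intro w v i j h1 h2
    obtain ⟨a, w', rfl⟩ : ∃ a w', w = Fin.cons a w' :=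
      ⟨w 0, Fin.tail w, (Fin.cons_self_tail w).symm⟩
    obtain ⟨b, v', rfl⟩ : ∃ b v', v = Fin.cons b v' :=
      ⟨v 0, Fin.tail v, (Fin.cons_self_tail v).symm⟩
    rw [valD_cons, valD_cons] at h1 h2
    by_cases hab : a = b
    · subst hab
      have e1 : valD d1 w' i = valD d1 v' j := by omega
      have e2 : valD d2 w' i = valD d2 v' j := by omega
      rcases ih w' v' i j e1 e2 with ⟨hwv, hij⟩ | hnp
      · left; rw [hwv, hij]; exact ⟨rfl, rfl⟩
      · right; exact nbrP_cons hnp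
    · have bw1 := valD_le d1 d1_le w' i
      have bw2 := valD_le d2 d2_le w' i
      have bv1 := valD_le d1 d1_le v' j
      have bv2 := valD_le d2 d2_le v' j
      right
      fin_cases a <;> fin_cases b <;>
        first
        | (exact absurd rfl hab)
        | (simp [d1, d2] at h1 h2
           first
        | -- (0,1)
          (have hXw : valD d1 w' i = 2^n := by omega
           have hXv : valD d1 v' j = 0 := by omega
           obtain ⟨hw1, hi1⟩ := val1_max hXw
           have hYw : valD d2 w' i = 0 := val2_of_all1 hw1 hi1
           have hYv : valD d2 v' j = 0 := by omega
           obtain ⟨hv0, hj0⟩ := vals_zero hXv hYv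
           exact nbrP_zero hab hw1 hv0 hi1 hj0)
        | -- (1,0)
          (have hXv : valD d1 v' j = 2^n := by omega
           have hXw : valD d1 w' i = 0 := by omega
           obtain ⟨hv1, hj1⟩ := val1_max hXv
           have hYv : valD d2 v' j = 0 := val2_of_all1 hv1 hj1
           have hYw : valD d2 w' i = 0 := by omega
           obtain ⟨hw0, hi0⟩ := vals_zero hXw hYw
           exact nbrP_zero hab hw0 hv1 hi0 hj1)
        | -- (0,2)
          (have hYw : valD d2 w' i = 2^n := by omega
           have hYv : valD d2 v' j = 0 := by omega
           obtain ⟨hw2, hi2⟩ := val2_max hYw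
           have hXw : valD d1 w' i = 0 := val1_of_all2 hw2 hi2
           have hXv : valD d1 v' j = 0 := by omega
           obtain ⟨hv0, hj0⟩ := vals_zero hXv hYv
           exact nbrP_zero hab hw2 hv0 hi2 hj0)
        | -- (2,0)
          (have hYv : valD d2 v' j = 2^n := by omega
           have hYw : valD d2 w' i = 0 := by omega
           obtain ⟨hv2, hj2⟩ := val2_max hYv
           have hXv : valD d1 v' j = 0 := val1_of_all2 hv2 hj2
           have hXw : valD d1 w' i = 0 := by omega
           obtain ⟨hw0, hi0⟩ := vals_zero hXw hYw
           exact nbrP_zero hab hw0 hv2 hi0 hj2)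
        | -- (1,2)
          (have hXv : valD d1 v' j = 2^n := by omega
           obtain ⟨hv1, hj1⟩ := val1_max hXv
           have hYv : valD d2 v' j = 0 := val2_of_all1 hv1 hj1
           have hYw : valD d2 w' i = 2^n := by omega
           obtain ⟨hw2, hi2⟩ := val2_max hYw
           exact nbrP_zero hab hw2 hv1 hi2 hj1)
        | -- (2,1)
          (have hXw : valD d1 w' i = 2^n := by omega
           obtain ⟨hw1, hi1⟩ := val1_max hXw
           have hYw : valD d2 w' i = 0 := val2_of_all1 hw1 hi1
           have hYv : valD d2 v' j = 2^n := by omega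
           obtain ⟨hv2, hj2⟩ := val2_max hYv
           exact nbrP_zero hab hw1 hv2 hi1 hj2))


/-! ### Geometry -/

/-- the third vertex, as a complex number -/
def om : ℂ := p 2

@[simp] lemma p_0 : p 0 = 0 := rfl
@[simp] lemma p_1 : p 1 = 1 := rfl
@[simp] lemma p_2 : p 2 = om := rfl

lemma om_im : om.im = Real.sqrt 3 / 2 := by
  simp [om, p]

lemma om_re : om.re = 1 / 2 := by
  simp [om, p]

lemma eq_coords {A B C D : ℝ} (h : (A:ℂ) + B * om = C + D * om) : A = C ∧ B = D := by
  have h3 : (0:ℝ) < Real.sqrt 3 := Real.sqrt_pos.mpr (by norm_num)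
  have him := congrArg Complex.im h
  have hre := congrArg Complex.re h
  simp only [Complex.add_im, Complex.add_re, Complex.ofReal_im, Complex.ofReal_re,
    Complex.mul_im, Complex.mul_re, om_im, om_re, zero_add, zero_mul, add_zero, mul_zero,
    sub_zero] at him hre
  have hBD : B = D := by
    have h2 : (B - D) * (Real.sqrt 3 / 2) = 0 := by nlinarith [him]
    rcases mul_eq_zero.mp h2 with h' | h'
    · linarith
    · linarith
  refine ⟨?_, hBD⟩
  rw [hBD] at hre
  linarith

lemma fw_nil (w : Fin 0 → Fin 3) : fw w = id := by
  simp [fw, fwl]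

lemma fw_cons {n : ℕ} (a : Fin 3) (w : Fin n → Fin 3) : fw (Fin.cons a w) = f a ∘ fw w := by
  unfold fw
  rw [List.ofFn_succ]
  have h : (List.ofFn fun i : Fin n => (Fin.cons a w : Fin (n+1) → Fin 3) i.succ) = List.ofFn w := by
    congr 1
  rw [Fin.cons_zero, h]
  rfl

/-- vertices of the cell -/
def vc {n : ℕ} (w : Fin n → Fin 3) (i : Fin 3) : ℂ := fw w (p i)

lemma vc_cons {n : ℕ} (a : Fin 3) (w : Fin n → Fin 3) (i : Fin 3) :
    vc (Fin.cons a w) i = f a (vc w i) := by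
  simp [vc, fw_cons]

lemma p_coords : ∀ i : Fin 3, p i = (d1 i : ℂ) + (d2 i : ℂ) * om := by
  intro i
  fin_cases i <;> simp

lemma vc_repr : ∀ {n : ℕ} (w : Fin n → Fin 3) (i : Fin 3),
    (2:ℂ)^n * vc w i = (valD d1 w i : ℕ) + (valD d2 w i : ℕ) * om := by
  intro n
  induction n with
  | zero =>
    intro w i
    have : vc w i = p i := by simp [vc, fw_nil]
    rw [this, p_coords i]
    try simp [valD]
  | succ n ih =>
    intro w i
    obtain ⟨a, w', rfl⟩ : ∃ a w', w = Fin.cons a w' :=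
      ⟨w 0, Fin.tail w, (Fin.cons_self_tail w).symm⟩
    rw [vc_cons, valD_cons, valD_cons]
    have hpa : (2:ℂ)^n * p a = (2^n * d1 a : ℕ) + (2^n * d2 a : ℕ) * om := by
      fin_cases a <;> simp <;> push_cast <;> ring
    have : (2:ℂ)^(n+1) * f a (vc w' i) = 2^n * vc w' i + 2^n * p a := by
      unfold f; ring
    rw [this, ih w' i, hpa]
    push_cast
    ring

lemma vc_eq_iff {n : ℕ} (w v : Fin n → Fin 3) (i j : Fin 3) :
    vc w i = vc v j ↔ (valD d1 w i = valD d1 v j ∧ valD d2 w i = valD d2 v j) := by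
  constructor
  · intro h
    have h2 : ((valD d1 w i : ℕ) : ℂ) + (valD d2 w i : ℕ) * om
        = ((valD d1 v j : ℕ) : ℂ) + (valD d2 v j : ℕ) * om := by
      rw [← vc_repr, ← vc_repr, h]
    have h3 : ((valD d1 w i : ℝ) : ℂ) + ((valD d2 w i : ℝ) : ℂ) * om
        = ((valD d1 v j : ℝ) : ℂ) + ((valD d2 v j : ℝ) : ℂ) * om := by
      push_cast at h2 ⊢
      exact h2
    obtain ⟨e1, e2⟩ := eq_coords h3
    exact ⟨by exact_mod_cast e1, by exact_mod_cast e2⟩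
  · intro ⟨h1, h2⟩
    have hne : ((2:ℂ)^n) ≠ 0 := pow_ne_zero _ two_ne_zero
    have := vc_repr w i
    rw [h1, h2, ← vc_repr v j] at this
    exact mul_left_cancel₀ hne this

lemma f_fix : ∀ i : Fin 3, f i (p i) = p i := by
  intro i
  fin_cases i <;> simp [f] <;> ring

lemma f_dist (a : Fin 3) (x y : ℂ) : dist (f a x) (f a y) = dist x y / 2 := by
  rw [Complex.dist_eq, Complex.dist_eq]
  have : f a x - f a y = (x - y) / 2 := by unfold f; ring
  rw [this, norm_div]
  simp

lemma mem_K_step (hK : IsSG K) (a : Fin 3) {x : ℂ} (hx : x ∈ K) : f a x ∈ K := by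
  rw [hK.2.2]
  fin_cases a
  · exact Or.inl (Or.inl ⟨x, hx, rfl⟩)
  · exact Or.inl (Or.inr ⟨x, hx, rfl⟩)
  · exact Or.inr ⟨x, hx, rfl⟩

lemma corner_mem (hK : IsSG K) (i : Fin 3) : p i ∈ K := by
  obtain ⟨z, hz⟩ := hK.1
  have hm : ∀ m : ℕ, (f i)^[m] z ∈ K := by
    intro m
    induction m with
    | zero => exact hz
    | succ m ihm =>
      rw [Function.iterate_succ_apply']
      exact mem_K_step hK i ihm
  have hdist : ∀ m : ℕ, dist ((f i)^[m] z) (p i) ≤ dist z (p i) * (1/2)^m := by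
    intro m
    induction m with
    | zero => simp
    | succ m ihm =>
      rw [Function.iterate_succ_apply']
      calc dist (f i ((f i)^[m] z)) (p i) = dist (f i ((f i)^[m] z)) (f i (p i)) := by
            rw [f_fix]
        _ = dist ((f i)^[m] z) (p i) / 2 := f_dist i _ _
        _ ≤ (dist z (p i) * (1/2)^m) / 2 := by linarith
        _ = dist z (p i) * (1/2)^(m+1) := by ring
  have hten : Filter.Tendsto (fun m : ℕ => dist z (p i) * (1/2)^m) atTop (nhds 0) := by
    have := tendsto_pow_atTop_nhds_zero_of_lt_one (by norm_num : (0:ℝ) ≤ 1/2)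
      (by norm_num : (1/2:ℝ) < 1)
    simpa using tendsto_const_nhds.mul this
  have htend : Filter.Tendsto (fun m : ℕ => (f i)^[m] z) atTop (nhds (p i)) := by
    rw [tendsto_iff_dist_tendsto_zero]
    exact squeeze_zero (fun m => dist_nonneg) hdist hten
  exact hK.2.1.isClosed.mem_of_tendsto htend (Filter.Eventually.of_forall hm)

/-- the closed triangle -/
def TT : Set ℂ := convexHull ℝ {0, 1, om}

lemma p_mem_TT : ∀ i : Fin 3, p i ∈ TT := by
  intro i
  fin_cases i <;> exact subset_convexHull ℝ _ (by simp)

lemma TT_compact : IsCompact TT :=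
  Set.Finite.isCompact_convexHull (𝕜 := ℝ) (Set.toFinite _)

lemma TT_nonempty : TT.Nonempty := ⟨0, subset_convexHull ℝ _ (by simp)⟩

lemma f_mem_TT (a : Fin 3) {x : ℂ} (hx : x ∈ TT) : f a x ∈ TT := by
  have h := (convex_convexHull ℝ ({0, 1, om} : Set ℂ)) hx (p_mem_TT a)
    (by norm_num : (0:ℝ) ≤ 1/2) (by norm_num : (0:ℝ) ≤ 1/2) (by norm_num)
  have : f a x = (1/2:ℝ) • x + (1/2:ℝ) • p a := by
    simp [Complex.real_smul, f]
    push_cast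
    ring
  rw [this]
  exact h

lemma K_sub_TT (hK : IsSG K) : K ⊆ TT := by
  obtain ⟨x₀, hx₀, hmax⟩ := hK.2.1.exists_isMaxOn hK.1
    ((Metric.continuous_infDist_pt TT).continuousOn)
  have hstep : ∃ a y, y ∈ K ∧ x₀ = f a y := by
    have h := hx₀
    rw [hK.2.2] at h
    rcases h with (⟨y, hy, hxy⟩ | ⟨y, hy, hxy⟩) | ⟨y, hy, hxy⟩
    · exact ⟨0, y, hy, hxy.symm⟩
    · exact ⟨1, y, hy, hxy.symm⟩
    · exact ⟨2, y, hy, hxy.symm⟩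
  obtain ⟨a, y, hyK, hxy⟩ := hstep
  obtain ⟨y', hy'T, hy'⟩ := TT_compact.exists_infDist_eq_dist TT_nonempty y
  have hle : Metric.infDist x₀ TT ≤ Metric.infDist x₀ TT / 2 := by
    calc Metric.infDist x₀ TT ≤ dist x₀ (f a y') :=
          Metric.infDist_le_dist_of_mem (f_mem_TT a hy'T)
      _ = dist y y' / 2 := by rw [hxy]; exact f_dist a y y'
      _ = Metric.infDist y TT / 2 := by rw [← hy']
      _ ≤ Metric.infDist x₀ TT / 2 := by
          have h2 := (isMaxOn_iff.mp hmax) y hyK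
          linarith
  have hzero : Metric.infDist x₀ TT = 0 := by
    have := Metric.infDist_nonneg (x := x₀) (s := TT)
    linarith
  intro x hx
  have hx0 : Metric.infDist x TT = 0 := by
    have h1 := (isMaxOn_iff.mp hmax) x hx
    have := Metric.infDist_nonneg (x := x) (s := TT)
    linarith [hzero]
  exact (TT_compact.isClosed.mem_iff_infDist_zero TT_nonempty).2 hx0

lemma TT_coords {z : ℂ} (hz : z ∈ TT) :
    ∃ s t : ℝ, 0 ≤ s ∧ 0 ≤ t ∧ s + t ≤ 1 ∧ z = s + t * om := by
  set S : Set ℂ := {z : ℂ | ∃ s t : ℝ, 0 ≤ s ∧ 0 ≤ t ∧ s + t ≤ 1 ∧ z = s + t * om} with hS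
  have hconv : Convex ℝ S := by
    intro z1 hz1 z2 hz2 a b ha hb hab
    obtain ⟨s1, t1, hs1, ht1, hst1, rfl⟩ := hz1
    obtain ⟨s2, t2, hs2, ht2, hst2, rfl⟩ := hz2
    refine ⟨a * s1 + b * s2, a * t1 + b * t2, by positivity, by positivity, ?_, ?_⟩
    · nlinarith
    · simp only [Complex.real_smul]
      push_cast
      ring
  have hgen : ({0, 1, om} : Set ℂ) ⊆ S := by
    intro z hz
    rcases hz with rfl | rfl | rfl
    · exact ⟨0, 0, le_refl _, le_refl _, by norm_num, by push_cast; ring⟩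
    · exact ⟨1, 0, by norm_num, le_refl _, by norm_num, by push_cast; ring⟩
    · exact ⟨0, 1, le_refl _, by norm_num, by norm_num, by push_cast; ring⟩
  exact convexHull_min hgen hconv hz

lemma fw_affine : ∀ {n : ℕ} (w : Fin n → Fin 3) (y : ℂ), fw w y = vc w 0 + y / 2^n := by
  intro n
  induction n with
  | zero =>
    intro w y
    simp [fw_nil, vc]
  | succ n ih =>
    intro w y
    obtain ⟨a, w', rfl⟩ : ∃ a w', w = Fin.cons a w' :=
      ⟨w 0, Fin.tail w, (Fin.cons_self_tail w).symm⟩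
    rw [fw_cons, vc_cons]
    show f a (fw w' y) = _
    rw [ih w' y]
    unfold f
    ring

lemma valD_zero_term (d : Fin 3 → ℕ) (hd : d 0 = 0) {n : ℕ} (w : Fin n → Fin 3) (i : Fin 3) :
    valD d w i = valD d w 0 + d i := by
  simp [valD, hd]

lemma adj_vc (hK : IsSG K) {n : ℕ} {w v : Fin n → Fin 3} (h : Adj K w v) :
    ∃ i j, vc w i = vc v j := by
  obtain ⟨hne, x, ⟨y, hyK, hxy⟩, z, hzK, hxz⟩ := h
  rw [fw_affine] at hxy hxz
  obtain ⟨s, t, hs, ht, hst, rfl⟩ := TT_coords (K_sub_TT hK hyK)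
  obtain ⟨s', t', hs', ht', hst', rfl⟩ := TT_coords (K_sub_TT hK hzK)
  have hne2 : ((2:ℂ)^n) ≠ 0 := pow_ne_zero _ two_ne_zero
  -- main equation
  have heq : ((valD d1 w 0 : ℕ) : ℂ) + (valD d2 w 0 : ℕ) * om + ((s:ℂ) + t * om)
      = ((valD d1 v 0 : ℕ) : ℂ) + (valD d2 v 0 : ℕ) * om + ((s':ℂ) + t' * om) := by
    have e1 : (2:ℂ)^n * (vc w 0 + ((s:ℂ) + t * om) / 2^n)
        = (2:ℂ)^n * (vc v 0 + ((s':ℂ) + t' * om) / 2^n) := by rw [hxy, hxz]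
    rw [mul_add, mul_add, vc_repr, vc_repr, mul_div_cancel₀ _ hne2,
      mul_div_cancel₀ _ hne2] at e1
    exact e1
  have heq2 : (((valD d1 w 0 : ℝ) + s : ℝ) : ℂ) + (((valD d2 w 0 : ℝ) + t : ℝ)) * om
      = (((valD d1 v 0 : ℝ) + s' : ℝ) : ℂ) + (((valD d2 v 0 : ℝ) + t' : ℝ)) * om := by
    push_cast
    push_cast at heq
    linear_combination heq
  obtain ⟨e1, e2⟩ := eq_coords heq2
  -- integer analysis
  set Xw : ℤ := (valD d1 w 0 : ℤ) with hXw
  set Yw : ℤ := (valD d2 w 0 : ℤ) with hYw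
  set Xv : ℤ := (valD d1 v 0 : ℤ) with hXv
  set Yv : ℤ := (valD d2 v 0 : ℤ) with hYv
  have hb1 : -1 ≤ Xv - Xw ∧ Xv - Xw ≤ 1 := by
    have c1 : ((-1:ℤ):ℝ) ≤ ((Xv - Xw : ℤ):ℝ) := by push_cast [hXv, hXw]; linarith
    have c2 : ((Xv - Xw : ℤ):ℝ) ≤ ((1:ℤ):ℝ) := by push_cast [hXv, hXw]; linarith
    exact ⟨by exact_mod_cast c1, by exact_mod_cast c2⟩
  have hb2 : -1 ≤ Yv - Yw ∧ Yv - Yw ≤ 1 := by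
    have c1 : ((-1:ℤ):ℝ) ≤ ((Yv - Yw : ℤ):ℝ) := by push_cast [hYv, hYw]; linarith
    have c2 : ((Yv - Yw : ℤ):ℝ) ≤ ((1:ℤ):ℝ) := by push_cast [hYv, hYw]; linarith
    exact ⟨by exact_mod_cast c1, by exact_mod_cast c2⟩
  have hb3 : -1 ≤ (Xv + Yv) - (Xw + Yw) ∧ (Xv + Yv) - (Xw + Yw) ≤ 1 := by
    have c1 : ((-1:ℤ):ℝ) ≤ (((Xv + Yv) - (Xw + Yw) : ℤ):ℝ) := by
      push_cast [hXv, hXw, hYv, hYw]; linarith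
    have c2 : (((Xv + Yv) - (Xw + Yw) : ℤ):ℝ) ≤ ((1:ℤ):ℝ) := by
      push_cast [hXv, hXw, hYv, hYw]; linarith
    exact ⟨by exact_mod_cast c1, by exact_mod_cast c2⟩
  have hcases : (Xv = Xw ∧ Yv = Yw) ∨ (Xv = Xw + 1 ∧ Yv = Yw) ∨ (Xv + 1 = Xw ∧ Yv = Yw) ∨
      (Xv = Xw ∧ Yv = Yw + 1) ∨ (Xv = Xw ∧ Yv + 1 = Yw) ∨ (Xv = Xw + 1 ∧ Yv + 1 = Yw) ∨
      (Xv + 1 = Xw ∧ Yv = Yw + 1) := by omega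
  have hval : ∀ i j : Fin 3, valD d1 w 0 + d1 i = valD d1 v 0 + d1 j →
      valD d2 w 0 + d2 i = valD d2 v 0 + d2 j → vc w i = vc v j := by
    intro i j h1 h2
    rw [vc_eq_iff]
    rw [valD_zero_term d1 rfl w i, valD_zero_term d1 rfl v j,
      valD_zero_term d2 rfl w i, valD_zero_term d2 rfl v j]
    exact ⟨h1, h2⟩
  rcases hcases with ⟨c1, c2⟩ | ⟨c1, c2⟩ | ⟨c1, c2⟩ | ⟨c1, c2⟩ | ⟨c1, c2⟩ | ⟨c1, c2⟩ | ⟨c1, c2⟩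
  · exact ⟨0, 0, hval 0 0 (by omega) (by omega)⟩
  · exact ⟨1, 0, hval 1 0 (by simp; omega) (by simp; omega)⟩
  · exact ⟨0, 1, hval 0 1 (by simp; omega) (by simp; omega)⟩
  · exact ⟨2, 0, hval 2 0 (by simp; omega) (by simp; omega)⟩
  · exact ⟨0, 2, hval 0 2 (by simp; omega) (by simp; omega)⟩
  · exact ⟨1, 2, hval 1 2 (by simp; omega) (by simp; omega)⟩
  · exact ⟨2, 1, hval 2 1 (by simp; omega) (by simp; omega)⟩

lemma vc_const {n : ℕ} {w : Fin n → Fin 3} {e : Fin 3} (hw : ∀ k, w k = e) : vc w e = p e := by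
  induction n with
  | zero => simp [vc, fw_nil]
  | succ n ih =>
    rw [← Fin.cons_self_tail w, vc_cons]
    have h0 : w 0 = e := hw 0
    have htail : ∀ k, Fin.tail w k = e := fun k => hw k.succ
    rw [h0, ih htail, f_fix]

lemma nbrP_vc : ∀ {n : ℕ} {w v : Fin n → Fin 3} {i j : Fin 3}, NbrP w v i j → vc w i = vc v j := by
  intro n
  induction n with
  | zero => intro w v i j h; exact absurd h (fun ⟨m, _⟩ => m.elim0)
  | succ n ih =>
    intro w v i j h
    obtain ⟨m, h1, h2, h3, hi, hj⟩ := h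
    obtain ⟨a, w', rfl⟩ : ∃ a w', w = Fin.cons a w' :=
      ⟨w 0, Fin.tail w, (Fin.cons_self_tail w).symm⟩
    obtain ⟨b, v', rfl⟩ : ∃ b v', v = Fin.cons b v' :=
      ⟨v 0, Fin.tail v, (Fin.cons_self_tail v).symm⟩
    rcases Fin.eq_zero_or_eq_succ m with rfl | ⟨m', rfl⟩
    · simp only [Fin.cons_zero] at h2 hi hj
      have hw' : ∀ k, w' k = b := fun k => by
        have := h3 k.succ (by simp)
        simpa using this.1
      have hv' : ∀ k, v' k = a := fun k => by
        have := h3 k.succ (by simp)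
        simpa using this.2
      rw [vc_cons, vc_cons, hi, hj, vc_const hw', vc_const hv']
      unfold f
      ring
    · have hab : a = b := by
        have := h1 0 (by simp)
        simpa using this
      subst hab
      have hp : NbrP w' v' i j := by
        refine ⟨m', fun k hk => ?_, by simpa using h2, fun k hk => ?_, by simpa using hi,
          by simpa using hj⟩
        · have := h1 k.succ (by simpa using hk)
          simpa using this
        · have := h3 k.succ (by simpa using hk)
          simpa using this
      rw [vc_cons, vc_cons, ih hp]

/-- The main geometric characterization of adjacency. -/
lemma adj_iff (hK : IsSG K) {n : ℕ} (w v : Fin n → Fin 3) : Adj K w v ↔ NbrC w v := by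
  constructor
  · intro h
    obtain ⟨i, j, hvc⟩ := adj_vc hK h
    obtain ⟨e1, e2⟩ := (vc_eq_iff w v i j).1 hvc
    rcases key_digit w v i j e1 e2 with ⟨hwv, _⟩ | hp
    · exact absurd hwv h.1
    · exact hp.nbrC
  · intro h
    obtain ⟨i, j, hp⟩ := h.exists_nbrP
    refine ⟨h.ne, vc w i, ⟨p i, corner_mem hK i, rfl⟩, p j, corner_mem hK j, ?_⟩
    exact (nbrP_vc hp).symm


/-! ### Graph structure -/

/-- constant word -/
def cst {n : ℕ} (i : Fin 3) : Fin n → Fin 3 := fun _ => i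

lemma cons_cst {n : ℕ} (i : Fin 3) : (Fin.cons i (cst i) : Fin (n+1) → Fin 3) = cst i := by
  funext k
  rcases Fin.eq_zero_or_eq_succ k with rfl | ⟨k', rfl⟩
  · rfl
  · simp [cst]

lemma cst_inj {n : ℕ} {i j : Fin 3} (h : (cst i : Fin (n+1) → Fin 3) = cst j) : i = j :=
  congrFun h 0

lemma nbrC_cons_same {n : ℕ} (a : Fin 3) (w v : Fin n → Fin 3) :
    NbrC (Fin.cons a w) (Fin.cons a v) ↔ NbrC w v := by
  constructor
  · rintro ⟨m, h1, h2, h3⟩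
    rcases Fin.eq_zero_or_eq_succ m with rfl | ⟨m', rfl⟩
    · simp at h2
    · refine ⟨m', fun k hk => ?_, by simpa using h2, fun k hk => ?_⟩
      · have := h1 k.succ (by simpa using hk)
        simpa using this
      · have := h3 k.succ (by simpa using hk)
        simpa using this
  · rintro ⟨m, h1, h2, h3⟩
    refine ⟨m.succ, fun k hk => ?_, by simpa using h2, fun k hk => ?_⟩
    · rcases Fin.eq_zero_or_eq_succ k with rfl | ⟨k', rfl⟩
      · simp
      · simp only [Fin.cons_succ]
        exact h1 k' (by simpa using hk)
    · rcases Fin.eq_zero_or_eq_succ k with rfl | ⟨k', rfl⟩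
      · simp at hk
      · simp only [Fin.cons_succ]
        exact h3 k' (by simpa using hk)

lemma nbrC_cons_diff {n : ℕ} {a b : Fin 3} (hab : a ≠ b) (w v : Fin n → Fin 3) :
    NbrC (Fin.cons a w) (Fin.cons b v) ↔ (w = cst b ∧ v = cst a) := by
  constructor
  · rintro ⟨m, h1, h2, h3⟩
    rcases Fin.eq_zero_or_eq_succ m with rfl | ⟨m', rfl⟩
    · constructor
      · funext k
        have := (h3 k.succ (by simp)).1
        simpa [cst] using this
      · funext k
        have := (h3 k.succ (by simp)).2
        simpa [cst] using this
    · exact absurd (by simpa using h1 0 (by simp)) hab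
  · rintro ⟨rfl, rfl⟩
    refine ⟨0, fun k hk => absurd hk (by simp), by simpa using hab, fun k hk => ?_⟩
    rcases Fin.eq_zero_or_eq_succ k with rfl | ⟨k', rfl⟩
    · simp at hk
    · simp [cst]

/-- graph Laplacian at a vertex -/
def Lap {n : ℕ} (u : (Fin n → Fin 3) → ℝ) (w : Fin n → Fin 3) : ℝ :=
  ∑ v : Fin n → Fin 3, if NbrC w v then u w - u v else 0

lemma sum_cons {n : ℕ} (g : (Fin (n+1) → Fin 3) → ℝ) :
    ∑ w : Fin (n+1) → Fin 3, g w = ∑ b : Fin 3, ∑ v : Fin n → Fin 3, g (Fin.cons b v) := by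
  rw [← Equiv.sum_comp (Fin.consEquiv (fun _ => Fin 3)) g, Fintype.sum_prod_type]
  rfl

lemma lap_cons_split {n : ℕ} (u : (Fin (n+1) → Fin 3) → ℝ) (a : Fin 3) (w : Fin n → Fin 3) :
    Lap u (Fin.cons a w) = (∑ v : Fin n → Fin 3,
        if NbrC w v then u (Fin.cons a w) - u (Fin.cons a v) else 0)
      + ∑ b ∈ Finset.univ.erase a,
        (if w = cst b then u (Fin.cons a w) - u (Fin.cons b (cst a)) else 0) := by
  unfold Lap
  rw [sum_cons (fun v => if NbrC (Fin.cons a w) v then u (Fin.cons a w) - u v else 0)]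
  rw [← Finset.sum_erase_add _ _ (Finset.mem_univ a), add_comm]
  congr 1
  · exact Finset.sum_congr rfl fun v _ =>
      if_congr (nbrC_cons_same a w v) rfl rfl
  · refine Finset.sum_congr rfl fun b hb => ?_
    have hab : a ≠ b := fun h => (Finset.mem_erase.mp hb).1 h.symm
    have : ∀ v, (if NbrC (Fin.cons a w) (Fin.cons b v) then u (Fin.cons a w) - u (Fin.cons b v)
        else 0) = if (w = cst b ∧ v = cst a) then u (Fin.cons a w) - u (Fin.cons b v) else 0 :=
      fun v => if_congr (nbrC_cons_diff hab w v) rfl rfl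
    rw [Finset.sum_congr rfl fun v _ => this v]
    by_cases hP : w = cst b
    · simp only [hP, true_and]
      rw [Finset.sum_ite_eq' Finset.univ (cst a)
        (fun v => u (Fin.cons a (cst b)) - u (Fin.cons b v))]
      simp
    · simp [hP]

lemma lap_cons_notcst {n : ℕ} (u : (Fin (n+1) → Fin 3) → ℝ) (a : Fin 3) (w : Fin n → Fin 3)
    (hw : ∀ j, w ≠ cst j) : Lap u (Fin.cons a w) = Lap (fun v => u (Fin.cons a v)) w := by
  rw [lap_cons_split]
  have : ∀ b ∈ Finset.univ.erase a,
      (if w = cst b then u (Fin.cons a w) - u (Fin.cons b (cst a)) else 0) = 0 := by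
    intro b _
    rw [if_neg (hw b)]
  rw [Finset.sum_congr rfl this, Finset.sum_const_zero, add_zero]
  rfl

lemma lap_cons_cst_self {n : ℕ} (u : (Fin (n+2) → Fin 3) → ℝ) (a : Fin 3) :
    Lap u (Fin.cons a (cst a)) = Lap (fun v => u (Fin.cons a v)) (cst a) := by
  rw [lap_cons_split]
  have h0 : ∀ b ∈ Finset.univ.erase a,
      (if (cst a : Fin (n+1) → Fin 3) = cst b then u (Fin.cons a (cst a)) - u (Fin.cons b (cst a))
        else 0) = 0 := by
    intro b hb
    exact if_neg fun hc => (Finset.mem_erase.mp hb).1 (cst_inj hc).symm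
  rw [Finset.sum_congr rfl h0, Finset.sum_const_zero, add_zero]
  rfl

lemma lap_cons_cst_ne {n : ℕ} (u : (Fin (n+2) → Fin 3) → ℝ) {a j : Fin 3} (hj : j ≠ a) :
    Lap u (Fin.cons a (cst j)) = Lap (fun v => u (Fin.cons a v)) (cst j)
      + (u (Fin.cons a (cst j)) - u (Fin.cons j (cst a))) := by
  rw [lap_cons_split]
  congr 1
  have h0 : ∀ b ∈ Finset.univ.erase a,
      (if (cst j : Fin (n+1) → Fin 3) = cst b then u (Fin.cons a (cst j)) - u (Fin.cons b (cst a))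
        else 0) = if b = j then u (Fin.cons a (cst j)) - u (Fin.cons b (cst a)) else 0 := by
    intro b _
    refine if_congr ⟨fun hc => (cst_inj hc).symm, fun hc => by rw [hc]⟩ rfl rfl
  rw [Finset.sum_congr rfl h0,
    Finset.sum_ite_eq' (Finset.univ.erase a) j
      (fun b => u (Fin.cons a (cst j)) - u (Fin.cons b (cst a)))]
  rw [if_pos (Finset.mem_erase.mpr ⟨hj, Finset.mem_univ j⟩)]

/-! ### The harmonic functions -/

/-- conductance sequence -/
def cseq : ℕ → ℝ
  | 0 => 1
  | 1 => 1
  | (n+2) => 3 * cseq (n+1) / (5 + 3 * cseq (n+1))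

lemma cseq_pos : ∀ n, 0 < cseq n := by
  intro n
  induction n with
  | zero => norm_num [cseq]
  | succ n ih =>
    cases n with
    | zero => norm_num [cseq]
    | succ m =>
      have : cseq (m + 2) = 3 * cseq (m+1) / (5 + 3 * cseq (m+1)) := rfl
      rw [this]
      have h1 : 0 < cseq (m+1) := ih
      positivity

/-- harmonic extension boundary data -/
def Yb (m : ℕ) (x : Fin 3 → ℝ) (i : Fin 3) : Fin 3 → ℝ := fun j =>
  if j = i then x i
  else ((1 + 3 * cseq m) * x i + x j + (x 0 + x 1 + x 2)) / (5 + 3 * cseq m)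

/-- the harmonic functions -/
def hf : (n : ℕ) → (Fin 3 → ℝ) → (Fin n → Fin 3) → ℝ
  | 0, x, _ => x 0
  | 1, x, w => x (w 0)
  | (n+2), x, w => hf (n+1) (Yb (n+1) x (w 0)) (Fin.tail w)

lemma hf_cons {n : ℕ} (x : Fin 3 → ℝ) (a : Fin 3) (w : Fin (n+1) → Fin 3) :
    hf (n+2) x (Fin.cons a w) = hf (n+1) (Yb (n+1) x a) w := by
  simp only [hf, Fin.cons_zero, Fin.tail_cons]

lemma nbrC_one (w v : Fin 1 → Fin 3) : NbrC w v ↔ w 0 ≠ v 0 := by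
  constructor
  · rintro ⟨m, _, h2, _⟩
    have : m = 0 := Subsingleton.elim m 0
    rwa [this] at h2
  · intro h
    refine ⟨0, fun k hk => absurd hk (by simp), h, fun k hk => absurd hk ?_⟩
    have : k = 0 := Subsingleton.elim k 0
    simp [this]

/-- The main harmonic computation. -/
lemma harmonic : ∀ (n : ℕ) (x : Fin 3 → ℝ),
    (∀ i, hf (n+1) x (cst i) = x i) ∧
    (∀ w : Fin (n+1) → Fin 3, (∀ j, w ≠ cst j) → Lap (hf (n+1) x) w = 0) ∧
    (∀ i, Lap (hf (n+1) x) (cst i) = cseq (n+1) * (3 * x i - (x 0 + x 1 + x 2))) := by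
  intro n
  induction n with
  | zero =>
    intro x
    refine ⟨fun i => rfl, fun w hw => ?_, fun i => ?_⟩
    · refine absurd (funext fun k => ?_) (hw (w 0))
      have hk : k = 0 := by
        have := k.isLt
        exact Fin.ext (by omega)
      rw [hk]
      rfl
    · unfold Lap
      rw [← Equiv.sum_comp (Equiv.funUnique (Fin 1) (Fin 3)).symm]
      have hval : ∀ b : Fin 3, ((Equiv.funUnique (Fin 1) (Fin 3)).symm b : Fin 1 → Fin 3)
          = cst b := fun b => rfl
      have hcond : ∀ b : Fin 3, NbrC (cst i : Fin 1 → Fin 3) (cst b) ↔ i ≠ b := by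
        intro b
        rw [nbrC_one]
        exact Iff.rfl
      rw [Fin.sum_univ_three]
      simp only [hval]
      rw [if_congr (hcond 0) rfl rfl, if_congr (hcond 1) rfl rfl, if_congr (hcond 2) rfl rfl]
      have hfv : ∀ b : Fin 3, hf 1 x (cst b) = x b := fun b => rfl
      rw [hfv, hfv, hfv, hfv]
      have hc : cseq 1 = 1 := rfl
      rw [hc]
      fin_cases i <;> simp <;> ring
  | succ n ih =>
    intro x
    have hcomp : ∀ a, (fun v => hf (n+2) x (Fin.cons a v)) = hf (n+1) (Yb (n+1) x a) :=
      fun a => funext fun v => hf_cons x a v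
    have hc1 : 0 < cseq (n+1) := cseq_pos (n+1)
    have hc5 : (5 : ℝ) + 3 * cseq (n+1) ≠ 0 := by linarith
    have hc2 : cseq (n+2) = 3 * cseq (n+1) / (5 + 3 * cseq (n+1)) := rfl
    have ha : ∀ i, hf (n+2) x (cst i) = x i := by
      intro i
      rw [← cons_cst, hf_cons]
      rw [(ih (Yb (n+1) x i)).1 i]
      simp [Yb]
    refine ⟨ha, ?_, ?_⟩
    · intro w hw
      obtain ⟨a, w', rfl⟩ : ∃ a w', w = Fin.cons a w' :=
        ⟨w 0, Fin.tail w, (Fin.cons_self_tail w).symm⟩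
      by_cases hcst : ∀ j, w' ≠ cst j
      · rw [lap_cons_notcst _ _ _ hcst, hcomp a]
        exact (ih (Yb (n+1) x a)).2.1 w' hcst
      · push_neg at hcst
        obtain ⟨j, rfl⟩ := hcst
        have hja : j ≠ a := by
          intro h
          subst h
          exact hw j (cons_cst j)
        rw [lap_cons_cst_ne _ hja, hcomp a]
        rw [(ih (Yb (n+1) x a)).2.2 j]
        rw [hf_cons, hf_cons, (ih (Yb (n+1) x a)).1 j, (ih (Yb (n+1) x j)).1 a]
        have haj : a ≠ j := fun h => hja h.symm
        unfold Yb
        fin_cases a <;> fin_cases j <;> simp_all <;> field_simp <;> ring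
    · intro i
      rw [← cons_cst, lap_cons_cst_self, hcomp i]
      rw [(ih (Yb (n+1) x i)).2.2 i]
      rw [hc2]
      unfold Yb
      fin_cases i <;> simp <;> field_simp <;> ring


/-! ### Energy identities -/

/-- combinatorial energy -/
def EnC {n : ℕ} (u : (Fin n → Fin 3) → ℝ) : ℝ :=
  (1/2) * ∑ w1 : Fin n → Fin 3, ∑ w2 : Fin n → Fin 3,
    if NbrC w1 w2 then (u w1 - u w2)^2 else 0

/-- combinatorial bilinear energy -/
def EB {n : ℕ} (u g : (Fin n → Fin 3) → ℝ) : ℝ :=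
  (1/2) * ∑ w1 : Fin n → Fin 3, ∑ w2 : Fin n → Fin 3,
    if NbrC w1 w2 then (u w1 - u w2) * (g w1 - g w2) else 0

lemma en_eq_enC (hK : IsSG K) {n : ℕ} (u : (Fin n → Fin 3) → ℝ) : En K u = EnC u := by
  unfold En EnC
  congr 1
  exact Finset.sum_congr rfl fun w1 _ => Finset.sum_congr rfl fun w2 _ =>
    if_congr (adj_iff hK w1 w2) rfl rfl

lemma enC_eq_eb {n : ℕ} (u : (Fin n → Fin 3) → ℝ) : EnC u = EB u u := by
  unfold EnC EB
  congr 1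
  exact Finset.sum_congr rfl fun w1 _ => Finset.sum_congr rfl fun w2 _ => by
    by_cases h : NbrC w1 w2 <;> simp [h, sq]

lemma swap_sum {n : ℕ} (F : (Fin n → Fin 3) → (Fin n → Fin 3) → ℝ) :
    (∑ w1 : Fin n → Fin 3, ∑ w2 : Fin n → Fin 3, if NbrC w1 w2 then F w1 w2 else 0)
    = ∑ w1 : Fin n → Fin 3, ∑ w2 : Fin n → Fin 3, if NbrC w1 w2 then F w2 w1 else 0 := by
  rw [Finset.sum_comm]
  exact Finset.sum_congr rfl fun w1 _ => Finset.sum_congr rfl fun w2 _ =>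
    if_congr ⟨NbrC.symm, NbrC.symm⟩ rfl rfl

lemma eb_lap {n : ℕ} (u g : (Fin n → Fin 3) → ℝ) :
    EB u g = ∑ w : Fin n → Fin 3, g w * Lap u w := by
  have h1 : (∑ w : Fin n → Fin 3, g w * Lap u w)
      = ∑ w1 : Fin n → Fin 3, ∑ w2 : Fin n → Fin 3,
        if NbrC w1 w2 then (u w1 - u w2) * g w1 else 0 := by
    unfold Lap
    refine Finset.sum_congr rfl fun w1 _ => ?_
    rw [Finset.mul_sum]
    refine Finset.sum_congr rfl fun w2 _ => ?_
    by_cases h : NbrC w1 w2 <;> simp [h] <;> ring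
  have h2 : (∑ w1 : Fin n → Fin 3, ∑ w2 : Fin n → Fin 3,
        if NbrC w1 w2 then (u w1 - u w2) * g w2 else 0)
      = - ∑ w1 : Fin n → Fin 3, ∑ w2 : Fin n → Fin 3,
        if NbrC w1 w2 then (u w1 - u w2) * g w1 else 0 := by
    rw [swap_sum (fun w1 w2 => (u w1 - u w2) * g w2)]
    have hterm : ∀ w1 w2 : Fin n → Fin 3,
        (if NbrC w1 w2 then (u w2 - u w1) * g w1 else 0)
        = -(if NbrC w1 w2 then (u w1 - u w2) * g w1 else 0) := fun w1 w2 => by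
      by_cases h : NbrC w1 w2 <;> simp [h] <;> ring
    simp_rw [hterm]
    rw [← Finset.sum_neg_distrib]
    exact Finset.sum_congr rfl fun w1 _ => by rw [← Finset.sum_neg_distrib]
  have hsplit : ∀ w1 w2 : Fin n → Fin 3,
      (if NbrC w1 w2 then (u w1 - u w2) * (g w1 - g w2) else 0)
      = (if NbrC w1 w2 then (u w1 - u w2) * g w1 else 0)
        - (if NbrC w1 w2 then (u w1 - u w2) * g w2 else 0) := fun w1 w2 => by
    by_cases h : NbrC w1 w2 <;> simp [h] <;> ring
  unfold EB
  simp_rw [hsplit, Finset.sum_sub_distrib]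
  rw [h2, ← h1]
  ring

lemma enC_add {n : ℕ} (u v : (Fin n → Fin 3) → ℝ) :
    EnC (fun w => u w + v w) = EnC u + 2 * EB u v + EnC v := by
  unfold EnC EB
  have hterm : ∀ w1 w2 : Fin n → Fin 3,
      (if NbrC w1 w2 then ((u w1 + v w1) - (u w2 + v w2))^2 else 0)
      = (if NbrC w1 w2 then (u w1 - u w2)^2 else 0)
        + (2 * if NbrC w1 w2 then (u w1 - u w2) * (v w1 - v w2) else 0)
        + (if NbrC w1 w2 then (v w1 - v w2)^2 else 0) := fun w1 w2 => by
    by_cases h : NbrC w1 w2 <;> simp [h] <;> ring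
  simp_rw [hterm, Finset.sum_add_distrib, ← Finset.mul_sum]
  ring

lemma enC_nonneg {n : ℕ} (u : (Fin n → Fin 3) → ℝ) : 0 ≤ EnC u := by
  unfold EnC
  apply mul_nonneg (by norm_num)
  apply Finset.sum_nonneg
  intro w1 _
  apply Finset.sum_nonneg
  intro w2 _
  by_cases h : NbrC w1 w2 <;> simp [h] <;> positivity

/-! ### Final assembly -/

lemma cseq_inv : ∀ n : ℕ, ((3/2 : ℝ) * cseq (n+1))⁻¹ = (5/3)^(n+1) - 1 := by
  intro n
  induction n with
  | zero => norm_num [cseq]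
  | succ m ihm =>
    have hc : cseq (m+2) = 3 * cseq (m+1) / (5 + 3 * cseq (m+1)) := rfl
    have h1 : 0 < cseq (m+1) := cseq_pos _
    have hpow : (5/3:ℝ)^(m+1) = ((3/2) * cseq (m+1))⁻¹ + 1 := by rw [ihm]; ring
    rw [hc, pow_succ, hpow]
    field_simp
    ring

/-- boundary data -/
def xbd (i0 j0 : Fin 3) : Fin 3 → ℝ := fun t => if t = i0 then 1 else if t = j0 then 0 else 1/2

lemma rn_corners (K : Set ℂ) (hK : IsSG K) (n : ℕ) {i0 j0 : Fin 3} (hij : i0 ≠ j0) :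
    Rn K (cst i0 : Fin (n+1) → Fin 3) (cst j0) = (5/3)^(n+1) - 1 := by
  have hxi : xbd i0 j0 i0 = 1 := by simp [xbd]
  have hxj : xbd i0 j0 j0 = 0 := by simp [xbd, Ne.symm hij]
  have hsum : xbd i0 j0 0 + xbd i0 j0 1 + xbd i0 j0 2 = 3/2 := by
    fin_cases i0 <;> fin_cases j0 <;>
      first
      | (exact absurd rfl hij)
      | (norm_num [xbd, Fin.ext_iff])
  obtain ⟨hA, hB, hC⟩ := harmonic n (xbd i0 j0)
  have hLi : Lap (hf (n+1) (xbd i0 j0)) (cst i0) = (3/2) * cseq (n+1) := by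
    rw [hC i0, hxi, hsum]; ring
  have hLj : Lap (hf (n+1) (xbd i0 j0)) (cst j0) = -((3/2) * cseq (n+1)) := by
    rw [hC j0, hxj, hsum]; ring
  have hLother : ∀ w : Fin (n+1) → Fin 3, w ≠ cst i0 → w ≠ cst j0 →
      Lap (hf (n+1) (xbd i0 j0)) w = 0 := by
    intro w hwi hwj
    by_cases hcst : ∀ j, w ≠ cst j
    · exact hB w hcst
    · push_neg at hcst
      obtain ⟨t, rfl⟩ := hcst
      have hti : t ≠ i0 := fun h => hwi (by rw [h])
      have htj : t ≠ j0 := fun h => hwj (by rw [h])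
      rw [hC t]
      have hxt : xbd i0 j0 t = 1/2 := by simp [xbd, hti, htj]
      rw [hxt, hsum]; ring
  have hne_cst : (cst i0 : Fin (n+1) → Fin 3) ≠ cst j0 := fun h => hij (cst_inj h)
  have hcollapse : ∀ g : (Fin (n+1) → Fin 3) → ℝ,
      (∑ w : Fin (n+1) → Fin 3, g w * Lap (hf (n+1) (xbd i0 j0)) w)
      = g (cst i0) * ((3/2) * cseq (n+1)) + g (cst j0) * (-((3/2) * cseq (n+1))) := by
    intro g
    have hsub : ({cst i0, cst j0} : Finset (Fin (n+1) → Fin 3)) ⊆ Finset.univ :=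
      Finset.subset_univ _
    have hzero : ∀ w ∈ Finset.univ, w ∉ ({cst i0, cst j0} : Finset (Fin (n+1) → Fin 3)) →
        g w * Lap (hf (n+1) (xbd i0 j0)) w = 0 := by
      intro w _ hw
      simp only [Finset.mem_insert, Finset.mem_singleton, not_or] at hw
      rw [hLother w hw.1 hw.2, mul_zero]
    rw [← Finset.sum_subset hsub hzero, Finset.sum_pair hne_cst, hLi, hLj]
  set S : Set ℝ := {e : ℝ | ∃ u : (Fin (n+1) → Fin 3) → ℝ,
    u (cst i0) = 1 ∧ u (cst j0) = 0 ∧ e = En K u} with hS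
  have hmem : (3/2) * cseq (n+1) ∈ S := by
    refine ⟨hf (n+1) (xbd i0 j0), by rw [hA i0, hxi], by rw [hA j0, hxj], ?_⟩
    rw [en_eq_enC hK, enC_eq_eb, eb_lap, hcollapse, hA i0, hA j0, hxi, hxj]
    ring
  have hlb : ∀ e ∈ S, (3/2) * cseq (n+1) ≤ e := by
    rintro e ⟨u, hu1, hu0, rfl⟩
    rw [en_eq_enC hK]
    have hdecomp : EnC u = EnC (hf (n+1) (xbd i0 j0))
        + 2 * EB (hf (n+1) (xbd i0 j0)) (fun w => u w - hf (n+1) (xbd i0 j0) w)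
        + EnC (fun w => u w - hf (n+1) (xbd i0 j0) w) := by
      calc EnC u = EnC (fun w => hf (n+1) (xbd i0 j0) w
          + (u w - hf (n+1) (xbd i0 j0) w)) := by
            congr 1
            funext w
            ring
        _ = _ := enC_add _ _
    have hEB0 : EB (hf (n+1) (xbd i0 j0)) (fun w => u w - hf (n+1) (xbd i0 j0) w) = 0 := by
      rw [eb_lap, hcollapse]
      simp only [hu1, hu0, hA i0, hA j0, hxi, hxj]
      ring
    have hE0' : EnC (hf (n+1) (xbd i0 j0)) = (3/2) * cseq (n+1) := by
      rw [enC_eq_eb, eb_lap, hcollapse, hA i0, hA j0, hxi, hxj]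
      ring
    have hnn := enC_nonneg (fun w => u w - hf (n+1) (xbd i0 j0) w)
    rw [hdecomp, hEB0, hE0']
    linarith
  have hsInf : sInf S = (3/2) * cseq (n+1) :=
    le_antisymm (csInf_le ⟨(3/2) * cseq (n+1), fun e he => hlb e he⟩ hmem)
      (le_csInf ⟨(3/2) * cseq (n+1), hmem⟩ hlb)
  show (sInf S)⁻¹ = _
  rw [hsInf]
  exact cseq_inv n

theorem statement3 (K : Set ℂ) (hK : IsSG K) (n : ℕ) (hn : 1 ≤ n) :
    Rn K (fun _ : Fin n => (0 : Fin 3)) (fun _ => 1) = (5/3)^n - 1 ∧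
    Rn K (fun _ : Fin n => (1 : Fin 3)) (fun _ => 2) = (5/3)^n - 1 ∧
    Rn K (fun _ : Fin n => (0 : Fin 3)) (fun _ => 2) = (5/3)^n - 1 := by
  obtain ⟨m, rfl⟩ : ∃ m, n = m + 1 := ⟨n - 1, by omega⟩
  exact ⟨rn_corners K hK m (by decide), rn_corners K hK m (by decide),
    rn_corners K hK m (by decide)⟩

end SG
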